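/- Let G = (V, E) and G' = (V, E') differ in a single edge (a,b) with π(a) < π(b), and let A be the set of vertices whose eliminator differs between LFMIS(G, π) and LFMIS(G', π), and F ⊆ A the set of vertices belonging to exactly one of the two maximal independent sets. Then every v ∈ A with v ≠ b has a neighbor u (in G or G') with π(u) < π(v) and u ∈ F. -/
import Mathlib

open scoped Classical

variable {V : Type*}

/-- The lexicographically first maximal independent set under ranking `π`:
`v` is in the LFMIS iff no neighbor of strictly smaller rank is in the LFMIS. -/
noncomputable def lfmis [Fintype V] (G : SimpleGraph V) (π : V → ℝ) : V → Prop :=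
  fun v => ∀ u, G.Adj u v → π u < π v → ¬ lfmis G π u
termination_by v => (Finset.univ.filter fun u => π u < π v).card
decreasing_by
  rename_i u _ hlt
  apply Finset.card_lt_card
  constructor
  · intro w hw
    simp only [Finset.mem_filter, Finset.mem_univ, true_and] at hw ⊢
    exact hw.trans hlt
  · intro hsub
    have := hsub (Finset.mem_filter.mpr ⟨Finset.mem_univ u, hlt⟩)
    simp only [Finset.mem_filter, Finset.mem_univ, true_and] at this
    exact lt_irrefl _ this

/-- The eliminator of `v`: the minimum-rank vertex of `(N(v) ∪ {v}) ∩ LFMIS(G, π)`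
(when it exists; otherwise `v` by convention). -/
noncomputable def eliminator [Fintype V] (G : SimpleGraph V) (π : V → ℝ) (v : V) : V :=
  if h : ∃ e, (e = v ∨ G.Adj e v) ∧ lfmis G π e ∧
      ∀ u, (u = v ∨ G.Adj u v) → lfmis G π u → π e ≤ π u
  then h.choose else v

lemma lfmis_iff [Fintype V] (G : SimpleGraph V) (π : V → ℝ) (v : V) :
    lfmis G π v ↔ ∀ u, G.Adj u v → π u < π v → ¬ lfmis G π u := by
  rw [lfmis]

lemma eliminator_exists [Fintype V] (G : SimpleGraph V) (π : V → ℝ) (v : V) :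
    ∃ e, (e = v ∨ G.Adj e v) ∧ lfmis G π e ∧
      ∀ u, (u = v ∨ G.Adj u v) → lfmis G π u → π e ≤ π u := by
  set S : Finset V := Finset.univ.filter fun e => (e = v ∨ G.Adj e v) ∧ lfmis G π e with hS
  have hne : S.Nonempty := by
    by_cases h : lfmis G π v
    · exact ⟨v, by simp [hS, h]⟩
    · rw [lfmis_iff] at h
      push_neg at h
      obtain ⟨u, hadj, _, hu⟩ := h
      exact ⟨u, by simp [hS, Or.inr hadj, hu]⟩
  obtain ⟨e, heS, hmin⟩ := S.exists_min_image π hne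
  simp only [hS, Finset.mem_filter, Finset.mem_univ, true_and] at heS
  exact ⟨e, heS.1, heS.2, fun u hu hl => hmin u (by simp [hS, hu, hl])⟩

lemma eliminator_spec [Fintype V] (G : SimpleGraph V) (π : V → ℝ) (v : V) :
    (eliminator G π v = v ∨ G.Adj (eliminator G π v) v) ∧ lfmis G π (eliminator G π v) ∧
      ∀ u, (u = v ∨ G.Adj u v) → lfmis G π u → π (eliminator G π v) ≤ π u := by
  rw [eliminator, dif_pos (eliminator_exists G π v)]
  exact (eliminator_exists G π v).choose_spec

lemma eliminator_le [Fintype V] (G : SimpleGraph V) (π : V → ℝ) (v : V) :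
    π (eliminator G π v) ≤ π v := by
  by_cases h : lfmis G π v
  · exact (eliminator_spec G π v).2.2 v (Or.inl rfl) h
  · rw [lfmis_iff] at h
    push_neg at h
    obtain ⟨u, hadj, hlt, hu⟩ := h
    exact ((eliminator_spec G π v).2.2 u (Or.inr hadj) hu).trans hlt.le

/-- If `G` and `G'` differ in the single edge `(a,b)` with `π a < π b`, then every
affected vertex `v ≠ b` (a vertex whose eliminator differs between the two LFMIS's)
has a neighbor `u` of smaller rank that is flipped, i.e. belongs to exactly one of
the two maximal independent sets. -/
theorem affected_has_flipped_neighbor [Fintype V] (G G' : SimpleGraph V) (π : V → ℝ)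
    (hπ : Function.Injective π) (a b : V) (hab : π a < π b)
    (hdiff :
      (∀ u w, G'.Adj u w ↔ (G.Adj u w ∨ (u = a ∧ w = b) ∨ (u = b ∧ w = a))) ∨
      (∀ u w, G'.Adj u w ↔ (G.Adj u w ∧ ¬ ((u = a ∧ w = b) ∨ (u = b ∧ w = a))))) :
    ∀ v, eliminator G π v ≠ eliminator G' π v → v ≠ b →
      ∃ u, (G.Adj u v ∨ G'.Adj u v) ∧ π u < π v ∧
        ¬ (lfmis G π u ↔ lfmis G' π u) := by
  intro v hne hvb
  set e := eliminator G π v with he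
  set e' := eliminator G' π v with he'
  obtain ⟨hm, hl, hmin⟩ := eliminator_spec G π v
  obtain ⟨hm', hl', hmin'⟩ := eliminator_spec G' π v
  rcases lt_trichotomy (π e) (π e') with h | h | h
  · -- e has smaller rank: e is flipped
    have hev : e ≠ v := by
      intro hev
      exact absurd (h.trans_le (eliminator_le G' π v)) (by rw [hev]; exact lt_irrefl _)
    have hadj : G.Adj e v := hm.resolve_left hev
    have hlt : π e < π v := h.trans_le (eliminator_le G' π v)
    refine ⟨e, Or.inl hadj, hlt, fun hiff => ?_⟩
    have hG'e : lfmis G' π e := hiff.mp hl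
    have hadj' : G'.Adj e v := by
      rcases hdiff with hd | hd
      · exact (hd e v).mpr (Or.inl hadj)
      · refine (hd e v).mpr ⟨hadj, ?_⟩
        rintro (⟨-, rfl⟩ | ⟨rfl, rfl⟩)
        · exact hvb rfl
        · exact absurd hab (not_lt.mpr hlt.le)
    exact absurd (hmin' e (Or.inr hadj') hG'e) (not_le.mpr h)
  · exact absurd (hπ h) hne
  · -- e' has smaller rank: e' is flipped
    have hev : e' ≠ v := by
      intro hev
      exact absurd (h.trans_le (eliminator_le G π v)) (by rw [hev]; exact lt_irrefl _)
    have hadj' : G'.Adj e' v := hm'.resolve_left hev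
    have hlt : π e' < π v := h.trans_le (eliminator_le G π v)
    have hadj : G.Adj e' v := by
      rcases hdiff with hd | hd
      · rcases (hd e' v).mp hadj' with hg | (⟨-, rfl⟩ | ⟨rfl, rfl⟩)
        · exact hg
        · exact absurd rfl hvb
        · exact absurd hab (not_lt.mpr hlt.le)
      · exact ((hd e' v).mp hadj').1
    refine ⟨e', Or.inr hadj', hlt, fun hiff => ?_⟩
    have hGe : lfmis G π e' := hiff.mpr hl'
    exact absurd (hmin e' (Or.inr hadj) hGe) (not_le.mpr h)
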